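/- arXiv:2208.11281 — 5 statements merged into one kernel-verified Lean document; each statement's English description precedes it below -/
import Mathlib

section
/- Let z₁ > 0, z₂ > 0, and c > 0 be real numbers, and define h : (−z₁, z₂) → ℝ by h(ω) = (z₁ + ω)·log((z₁ + ω)/z₁) + (z₂ − ω)·log((z₂ − ω)/c). Then ω* = z₁(z₂ − c)/(z₁ + c) lies in the open interval (−z₁, z₂), h is strictly convex on (−z₁, z₂), and h attains its unique global minimum over (−z₁, z₂) at ω*. -/
/-- For z₁, z₂, c > 0 and h(ω) = (z₁+ω)log((z₁+ω)/z₁) + (z₂−ω)log((z₂−ω)/c) on (−z₁, z₂):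
ω* = z₁(z₂−c)/(z₁+c) is interior, h is strictly convex, and ω* is the unique global minimizer. -/
theorem stmt6 (z₁ z₂ c : ℝ) (hz₁ : 0 < z₁) (hz₂ : 0 < z₂) (hc : 0 < c) :
    let h : ℝ → ℝ := fun ω =>
      (z₁ + ω) * Real.log ((z₁ + ω) / z₁) + (z₂ - ω) * Real.log ((z₂ - ω) / c)
    let ωstar : ℝ := z₁ * (z₂ - c) / (z₁ + c)
    ωstar ∈ Set.Ioo (-z₁) z₂ ∧
      StrictConvexOn ℝ (Set.Ioo (-z₁) z₂) h ∧
      ∀ ω ∈ Set.Ioo (-z₁) z₂, ω ≠ ωstar → h ωstar < h ω := by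
  intro h ωstar
  have hzc : (0:ℝ) < z₁ + c := by linarith
  have hωdef : ωstar = z₁ * (z₂ - c) / (z₁ + c) := rfl
  have hω1 : 0 < z₁ + ωstar := by
    have e : z₁ + ωstar = z₁ * (z₁ + z₂) / (z₁ + c) := by
      rw [hωdef]; field_simp; ring
    rw [e]; positivity
  have hω2 : 0 < z₂ - ωstar := by
    have e : z₂ - ωstar = c * (z₁ + z₂) / (z₁ + c) := by
      rw [hωdef]; field_simp; ring
    rw [e]; positivity
  have hmem : ωstar ∈ Set.Ioo (-z₁) z₂ := ⟨by linarith, by linarith⟩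
  set φ : ℝ → ℝ := fun x => Real.log ((z₁ + x) / z₁) - Real.log ((z₂ - x) / c) with hφ
  have hderiv : ∀ x ∈ Set.Ioo (-z₁) z₂, HasDerivAt h (φ x) x := by
    intro x hx
    have h1 : 0 < z₁ + x := by have := hx.1; linarith
    have h2 : 0 < z₂ - x := by have := hx.2; linarith
    have hb1 : HasDerivAt (fun ω : ℝ => z₁ + ω) 1 x := (hasDerivAt_id x).const_add z₁
    have hb2 : HasDerivAt (fun ω : ℝ => z₂ - ω) (-1) x := by
      simpa using (hasDerivAt_id x).const_sub z₂
    have hl1 : HasDerivAt (fun ω : ℝ => Real.log ((z₁ + ω) / z₁)) (1 / (z₁ + x)) x := by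
      have hd : HasDerivAt (fun ω : ℝ => (z₁ + ω) / z₁) (1 / z₁) x := hb1.div_const z₁
      have := hd.log (by positivity)
      convert this using 1
      field_simp
    have hl2 : HasDerivAt (fun ω : ℝ => Real.log ((z₂ - ω) / c)) (-(1 / (z₂ - x))) x := by
      have hd : HasDerivAt (fun ω : ℝ => (z₂ - ω) / c) (-1 / c) x := hb2.div_const c
      have := hd.log (by positivity)
      convert this using 1
      field_simp
    have d1 := hb1.mul hl1
    have d2 := hb2.mul hl2
    have := d1.add d2
    refine this.congr_deriv ?_
    simp only [hφ]
    field_simp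
    ring
  have hcont : ContinuousOn h (Set.Ioo (-z₁) z₂) := fun x hx =>
    ((hderiv x hx).continuousAt).continuousWithinAt
  have hdve : ∀ x ∈ Set.Ioo (-z₁) z₂, deriv h x = φ x := fun x hx => (hderiv x hx).deriv
  have hmono : StrictMonoOn φ (Set.Ioo (-z₁) z₂) := by
    intro a ha b hb hab
    have h1a : 0 < z₁ + a := by have := ha.1; linarith
    have h2a : 0 < z₂ - a := by have := ha.2; linarith
    have h1b : 0 < z₁ + b := by have := hb.1; linarith
    have h2b : 0 < z₂ - b := by have := hb.2; linarith
    have l1 : Real.log ((z₁ + a) / z₁) < Real.log ((z₁ + b) / z₁) := by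
      apply Real.log_lt_log (by positivity)
      exact div_lt_div_of_pos_right (by linarith) hz₁
    have l2 : Real.log ((z₂ - b) / c) < Real.log ((z₂ - a) / c) := by
      apply Real.log_lt_log (by positivity)
      exact div_lt_div_of_pos_right (by linarith) hc
    simp only [hφ]
    linarith
  have hconv : StrictConvexOn ℝ (Set.Ioo (-z₁) z₂) h := by
    apply StrictMonoOn.strictConvexOn_of_deriv (convex_Ioo _ _) hcont
    rw [interior_Ioo]
    intro a ha b hb hab
    rw [hdve a ha, hdve b hb]
    exact hmono ha hb hab
  have hφstar : φ ωstar = 0 := by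
    have hkey : (z₁ + ωstar) / z₁ = (z₂ - ωstar) / c := by
      rw [hωdef]; field_simp; ring
    simp only [hφ, hkey, sub_self]
  refine ⟨hmem, hconv, ?_⟩
  intro ω hω hne
  rcases lt_or_gt_of_ne hne with hlt | hgt
  · -- ω < ωstar : h is strictly antitone on [ω, ωstar]
    have hsub : Set.Icc ω ωstar ⊆ Set.Ioo (-z₁) z₂ :=
      Set.Icc_subset_Ioo hω.1 hmem.2
    have hanti : StrictAntiOn h (Set.Icc ω ωstar) := by
      apply strictAntiOn_of_deriv_neg (convex_Icc _ _) (hcont.mono hsub)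
      intro y hy
      rw [interior_Icc] at hy
      have hyI : y ∈ Set.Ioo (-z₁) z₂ := hsub ⟨le_of_lt hy.1, le_of_lt hy.2⟩
      rw [hdve y hyI]
      have := hmono hyI hmem hy.2
      linarith [hφstar]
    exact hanti (Set.left_mem_Icc.2 (le_of_lt hlt)) (Set.right_mem_Icc.2 (le_of_lt hlt)) hlt
  · -- ωstar < ω
    have hsub : Set.Icc ωstar ω ⊆ Set.Ioo (-z₁) z₂ :=
      Set.Icc_subset_Ioo hmem.1 hω.2
    have hmon : StrictMonoOn h (Set.Icc ωstar ω) := by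
      apply strictMonoOn_of_deriv_pos (convex_Icc _ _) (hcont.mono hsub)
      intro y hy
      rw [interior_Icc] at hy
      have hyI : y ∈ Set.Ioo (-z₁) z₂ := hsub ⟨le_of_lt hy.1, le_of_lt hy.2⟩
      rw [hdve y hyI]
      have := hmono hmem hyI hy.1
      linarith [hφstar]
    exact hmon (Set.left_mem_Icc.2 (le_of_lt hgt)) (Set.right_mem_Icc.2 (le_of_lt hgt)) hgt
end

section
/- Let z₁ > 0, z₂ > 0, and c > 0 be real numbers, let h(ω) = (z₁ + ω)·log((z₁ + ω)/z₁) + (z₂ − ω)·log((z₂ − ω)/c), and let ω* = z₁(z₂ − c)/(z₁ + c). For any L ≤ U with [L,U] ⊆ (−z₁, z₂), the minimizer of h over the closed interval [L,U] is unique and equals min(max(ω*, L), U), i.e., the clamp of ω* to [L,U]. -/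
/-- The minimizer of h(ω) = (z₁+ω)log((z₁+ω)/z₁) + (z₂−ω)log((z₂−ω)/c) over a closed
interval [L,U] ⊆ (−z₁, z₂) is unique and equals the clamp of ω* = z₁(z₂−c)/(z₁+c) to [L,U]. -/
theorem stmt7 (z₁ z₂ c L U : ℝ) (hz₁ : 0 < z₁) (hz₂ : 0 < z₂) (hc : 0 < c)
    (hLU : L ≤ U) (hsub : Set.Icc L U ⊆ Set.Ioo (-z₁) z₂) :
    let h : ℝ → ℝ := fun ω =>
      (z₁ + ω) * Real.log ((z₁ + ω) / z₁) + (z₂ - ω) * Real.log ((z₂ - ω) / c)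
    let m : ℝ := min (max (z₁ * (z₂ - c) / (z₁ + c)) L) U
    m ∈ Set.Icc L U ∧ ∀ ω ∈ Set.Icc L U, ω ≠ m → h m < h ω := by
  intro h m
  set ω' : ℝ := z₁ * (z₂ - c) / (z₁ + c) with hω'
  have hz₁c : (0:ℝ) < z₁ + c := by linarith
  have hmL : L ≤ m := le_min (le_max_right _ _) hLU
  have hmU : m ≤ U := min_le_right _ _
  have hmIcc : m ∈ Set.Icc L U := ⟨hmL, hmU⟩
  refine ⟨hmIcc, ?_⟩
  have hpos : ∀ x ∈ Set.Icc L U, 0 < z₁ + x ∧ 0 < z₂ - x := by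
    intro x hx
    obtain ⟨h1, h2⟩ := hsub hx
    constructor <;> linarith
  set H : ℝ → ℝ := fun x => (z₁ + x) * (Real.log (z₁ + x) - Real.log z₁)
      + (z₂ - x) * (Real.log (z₂ - x) - Real.log c) with hH
  have hhH : ∀ x ∈ Set.Icc L U, h x = H x := by
    intro x hx
    obtain ⟨p1, p2⟩ := hpos x hx
    simp only [h, H, Real.log_div p1.ne' hz₁.ne', Real.log_div p2.ne' hc.ne']
  set φ : ℝ → ℝ := fun x =>
      (Real.log (z₁ + x) - Real.log z₁) - (Real.log (z₂ - x) - Real.log c) with hφ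
  have hderiv : ∀ x ∈ Set.Icc L U, HasDerivAt H (φ x) x := by
    intro x hx
    obtain ⟨p1, p2⟩ := hpos x hx
    have d1 : HasDerivAt (fun y => z₁ + y) 1 x := by
      simpa using (hasDerivAt_id x).const_add z₁
    have d2 : HasDerivAt (fun y => z₂ - y) (-1) x := by
      simpa using (hasDerivAt_id x).const_sub z₂
    have dl1 : HasDerivAt (fun y => Real.log (z₁ + y)) (1 / (z₁ + x)) x := by
      simpa [Function.comp_def] using (Real.hasDerivAt_log p1.ne').comp x d1
    have dl2 : HasDerivAt (fun y => Real.log (z₂ - y)) (-(1 / (z₂ - x))) x := by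
      have := (Real.hasDerivAt_log p2.ne').comp x d2
      simpa [Function.comp_def] using this
    have hD := ((d1.mul (dl1.sub_const (Real.log z₁)))).add
        ((d2.mul (dl2.sub_const (Real.log c))))
    refine HasDerivAt.congr_deriv hD ?_
    simp only [φ]
    field_simp
    ring
  have hsign_pos : ∀ x ∈ Set.Icc L U, ω' < x → 0 < φ x := by
    intro x hx hlt
    obtain ⟨p1, p2⟩ := hpos x hx
    have key : (z₂ - x) * z₁ < (z₁ + x) * c := by
      rw [hω', div_lt_iff₀ hz₁c] at hlt
      nlinarith
    have lg := Real.log_lt_log (by positivity) key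
    rw [Real.log_mul p2.ne' hz₁.ne', Real.log_mul p1.ne' hc.ne'] at lg
    simp only [φ]; linarith
  have hsign_neg : ∀ x ∈ Set.Icc L U, x < ω' → φ x < 0 := by
    intro x hx hlt
    obtain ⟨p1, p2⟩ := hpos x hx
    have key : (z₁ + x) * c < (z₂ - x) * z₁ := by
      rw [hω', lt_div_iff₀ hz₁c] at hlt
      nlinarith
    have lg := Real.log_lt_log (by positivity) key
    rw [Real.log_mul p2.ne' hz₁.ne', Real.log_mul p1.ne' hc.ne'] at lg
    simp only [φ]; linarith
  have hcont : ContinuousOn H (Set.Icc L U) := by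
    have c1 : ContinuousOn (fun x : ℝ => z₁ + x) (Set.Icc L U) :=
      (continuous_const.add continuous_id).continuousOn
    have c2 : ContinuousOn (fun x : ℝ => z₂ - x) (Set.Icc L U) :=
      (continuous_const.sub continuous_id).continuousOn
    exact (c1.mul ((c1.log fun x hx => (hpos x hx).1.ne').sub continuousOn_const)).add
      (c2.mul ((c2.log fun x hx => (hpos x hx).2.ne').sub continuousOn_const))
  intro ω hω hne
  rw [hhH m hmIcc, hhH ω hω]
  rcases lt_or_gt_of_ne hne with hlt | hgt
  · -- ω < m : m ≤ ω', H strictly decreasing on [ω, m]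
    have hLm : L < m := lt_of_le_of_lt hω.1 hlt
    have hmω' : m ≤ ω' := by
      by_contra hcon
      push_neg at hcon
      have hmax : max ω' L < m := max_lt hcon hLm
      have := min_le_left (max ω' L) U
      linarith
    have hsub' : Set.Icc ω m ⊆ Set.Icc L U := Set.Icc_subset_Icc hω.1 hmU
    have hanti : StrictAntiOn H (Set.Icc ω m) := by
      apply strictAntiOn_of_deriv_neg (convex_Icc ω m) (hcont.mono hsub')
      intro x hx
      rw [interior_Icc] at hx
      rw [(hderiv x (hsub' ⟨hx.1.le, hx.2.le⟩)).deriv]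
      exact hsign_neg x (hsub' ⟨hx.1.le, hx.2.le⟩) (lt_of_lt_of_le hx.2 hmω')
    exact hanti (Set.left_mem_Icc.2 hlt.le) (Set.right_mem_Icc.2 hlt.le) hlt
  · -- m < ω : ω' ≤ m, H strictly increasing on [m, ω]
    have hmU' : m < U := lt_of_lt_of_le hgt hω.2
    have hω'm : ω' ≤ m := by
      by_contra hcon
      push_neg at hcon
      have h1 : max ω' L ≤ U := by
        rcases le_or_gt (max ω' L) U with hle | hgt'
        · exact hle
        · have : m = U := by
            simp only [m]
            exact min_eq_right hgt'.le
          linarith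
      have : m = max ω' L := min_eq_left h1
      have := le_max_left ω' L
      linarith
    have hsub' : Set.Icc m ω ⊆ Set.Icc L U := Set.Icc_subset_Icc hmL hω.2
    have hmono : StrictMonoOn H (Set.Icc m ω) := by
      apply strictMonoOn_of_deriv_pos (convex_Icc m ω) (hcont.mono hsub')
      intro x hx
      rw [interior_Icc] at hx
      rw [(hderiv x (hsub' ⟨hx.1.le, hx.2.le⟩)).deriv]
      exact hsign_pos x (hsub' ⟨hx.1.le, hx.2.le⟩) (lt_of_le_of_lt hω'm hx.1)
    exact hmono (Set.left_mem_Icc.2 hgt.le) (Set.right_mem_Icc.2 hgt.le) hgt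
end

section
/- Two-player binary game: given parameters d₁,d₂,β₁,β₂ ∈ ℝ and shocks u₁,u₂ ∈ ℝ, each player j ∈ {1,2} chooses y⁽ʲ⁾ ∈ {0,1} and receives payoff y⁽ʲ⁾·(d_j + β_j·y⁽⁻ʲ⁾ + u_j), where y⁽⁻ʲ⁾ is the other player's action. Suppose β₁ < 0, β₂ < 0, and −d_j < u_j < −d_j − β_j for j = 1,2. Then the set of pure strategy Nash equilibria is exactly {(1,0), (0,1)}. -/
/-- A profile y = (y₁,y₂) ∈ {0,1}² is a pure strategy Nash equilibrium of the two-player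
binary game in which player j receives payoff y⁽ʲ⁾·(d_j + β_j·y⁽⁻ʲ⁾ + u_j). -/
def IsPSNE (d₁ d₂ β₁ β₂ u₁ u₂ : ℝ) (y : ℝ × ℝ) : Prop :=
  y.1 ∈ ({0, 1} : Set ℝ) ∧ y.2 ∈ ({0, 1} : Set ℝ) ∧
    (∀ z ∈ ({0, 1} : Set ℝ), z * (d₁ + β₁ * y.2 + u₁) ≤ y.1 * (d₁ + β₁ * y.2 + u₁)) ∧
    (∀ z ∈ ({0, 1} : Set ℝ), z * (d₂ + β₂ * y.1 + u₂) ≤ y.2 * (d₂ + β₂ * y.1 + u₂))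

/-- Under strategic substitution (β₁, β₂ < 0), if −d_j < u_j < −d_j − β_j for j = 1,2,
the set of pure strategy Nash equilibria is exactly {(1,0), (0,1)}. -/
theorem stmt11 (d₁ d₂ β₁ β₂ u₁ u₂ : ℝ) (hβ₁ : β₁ < 0) (hβ₂ : β₂ < 0)
    (h₁ : -d₁ < u₁ ∧ u₁ < -d₁ - β₁) (h₂ : -d₂ < u₂ ∧ u₂ < -d₂ - β₂) :
    {y : ℝ × ℝ | IsPSNE d₁ d₂ β₁ β₂ u₁ u₂ y} = {((1 : ℝ), (0 : ℝ)), ((0 : ℝ), (1 : ℝ))} := by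
  obtain ⟨h₁l, h₁r⟩ := h₁
  obtain ⟨h₂l, h₂r⟩ := h₂
  ext ⟨a, b⟩
  simp only [Set.mem_setOf_eq, IsPSNE, Set.mem_insert_iff, Set.mem_singleton_iff,
    Prod.mk.injEq]
  constructor
  · rintro ⟨ha, hb, H1, H2⟩
    have k1 := H1 0 (by simp)
    have k2 := H1 1 (by simp)
    have k3 := H2 0 (by simp)
    have k4 := H2 1 (by simp)
    rcases ha with ha | ha <;> rcases hb with hb | hb <;>
        simp only [ha, hb] at k1 k2 k3 k4
    · exfalso; nlinarith
    · exact Or.inr ⟨ha, hb⟩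
    · exact Or.inl ⟨ha, hb⟩
    · exfalso; nlinarith
  · rintro (⟨ha, hb⟩ | ⟨ha, hb⟩) <;> subst ha <;> subst hb <;>
      refine ⟨by simp, by simp, ?_, ?_⟩ <;>
      rintro z (rfl | rfl) <;> simp <;> nlinarith
end

section
/- Two-player binary game: given parameters d₁,d₂,β₁,β₂ ∈ ℝ and shocks u₁,u₂ ∈ ℝ, each player j ∈ {1,2} chooses y⁽ʲ⁾ ∈ {0,1} and receives payoff y⁽ʲ⁾·(d_j + β_j·y⁽⁻ʲ⁾ + u_j), where y⁽⁻ʲ⁾ is the other player's action. Suppose β₁ < 0 and β₂ < 0, and suppose u₁ ∉ {−d₁, −d₁ − β₁} and u₂ ∉ {−d₂, −d₂ − β₂}. Then the set of pure strategy Nash equilibria equals {(1,0)} if and only if (u₁,u₂) belongs to the set S = {u : u₁ > −d₁ − β₁ and u₂ < −d₂ − β₂} ∪ {u : −d₁ < u₁ < −d₁ − β₁ and u₂ < −d₂}. -/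
lemma br (c y : ℝ) (hy : y ∈ ({0, 1} : Set ℝ)) :
    (∀ z ∈ ({0, 1} : Set ℝ), z * c ≤ y * c) ↔ ((y = 0 ∧ c ≤ 0) ∨ (y = 1 ∧ 0 ≤ c)) := by
  constructor
  · intro h
    rcases hy with hy | hy
    · left; refine ⟨hy, ?_⟩
      have := h 1 (by right; rfl)
      rw [hy] at this; linarith
    · right; refine ⟨hy, ?_⟩
      have := h 0 (by left; rfl)
      rw [hy] at this; linarith
  · rintro (⟨hy, hc⟩ | ⟨hy, hc⟩) z hz <;> subst hy <;>
      rcases hz with hz | hz <;> subst hz <;> simp <;> nlinarith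

/-- Under strategic substitution and away from the threshold boundaries, the set of pure
strategy Nash equilibria equals {(1,0)} iff (u₁,u₂) lies in the region
S = {u₁ > −d₁ − β₁, u₂ < −d₂ − β₂} ∪ {−d₁ < u₁ < −d₁ − β₁, u₂ < −d₂}. -/
theorem stmt12 (d₁ d₂ β₁ β₂ u₁ u₂ : ℝ) (hβ₁ : β₁ < 0) (hβ₂ : β₂ < 0)
    (h₁ : u₁ ∉ ({-d₁, -d₁ - β₁} : Set ℝ)) (h₂ : u₂ ∉ ({-d₂, -d₂ - β₂} : Set ℝ)) :
    {y : ℝ × ℝ | IsPSNE d₁ d₂ β₁ β₂ u₁ u₂ y} = {((1 : ℝ), (0 : ℝ))} ↔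
      (u₁, u₂) ∈ ({u : ℝ × ℝ | -d₁ - β₁ < u.1 ∧ u.2 < -d₂ - β₂} ∪
        {u : ℝ × ℝ | -d₁ < u.1 ∧ u.1 < -d₁ - β₁ ∧ u.2 < -d₂}) := by
  simp only [Set.mem_insert_iff, Set.mem_singleton_iff, not_or] at h₁ h₂
  obtain ⟨ha1, ha2⟩ := h₁
  obtain ⟨hb1, hb2⟩ := h₂
  have key : ∀ y : ℝ × ℝ, IsPSNE d₁ d₂ β₁ β₂ u₁ u₂ y ↔
      ((y = ((0 : ℝ), (0 : ℝ)) ∧ u₁ < -d₁ ∧ u₂ < -d₂) ∨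
       (y = ((1 : ℝ), (0 : ℝ)) ∧ -d₁ < u₁ ∧ u₂ < -d₂ - β₂) ∨
       (y = ((0 : ℝ), (1 : ℝ)) ∧ u₁ < -d₁ - β₁ ∧ -d₂ < u₂) ∨
       (y = ((1 : ℝ), (1 : ℝ)) ∧ -d₁ - β₁ < u₁ ∧ -d₂ - β₂ < u₂)) := by
    intro y
    constructor
    · rintro ⟨hy1, hy2, hbr1, hbr2⟩
      rw [br _ _ hy1] at hbr1
      rw [br _ _ hy2] at hbr2
      rcases hbr1 with ⟨e1, c1⟩ | ⟨e1, c1⟩ <;> rcases hbr2 with ⟨e2, c2⟩ | ⟨e2, c2⟩ <;>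
        rw [e2] at c1 <;> rw [e1] at c2
      · exact Or.inl ⟨Prod.ext e1 e2,
          lt_of_le_of_ne (by linarith) ha1, lt_of_le_of_ne (by linarith) hb1⟩
      · refine Or.inr (Or.inr (Or.inl ⟨Prod.ext e1 e2, ?_, ?_⟩))
        · exact lt_of_le_of_ne (by linarith) ha2
        · exact lt_of_le_of_ne (by linarith) (fun h => hb1 h.symm)
      · refine Or.inr (Or.inl ⟨Prod.ext e1 e2, ?_, ?_⟩)
        · exact lt_of_le_of_ne (by linarith) (fun h => ha1 h.symm)
        · exact lt_of_le_of_ne (by linarith) hb2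
      · refine Or.inr (Or.inr (Or.inr ⟨Prod.ext e1 e2, ?_, ?_⟩))
        · exact lt_of_le_of_ne (by linarith) (fun h => ha2 h.symm)
        · exact lt_of_le_of_ne (by linarith) (fun h => hb2 h.symm)
    · rintro (⟨hy, c1, c2⟩ | ⟨hy, c1, c2⟩ | ⟨hy, c1, c2⟩ | ⟨hy, c1, c2⟩) <;> subst hy <;>
        refine ⟨by simp, by simp, ?_, ?_⟩ <;> rw [br _ _ (by simp)] <;> simp <;> linarith
  constructor
  · rintro hset
    rw [Set.eq_singleton_iff_unique_mem] at hset
    obtain ⟨hmem, huniq⟩ := hset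
    rw [Set.mem_setOf_eq, key] at hmem
    have hmain : -d₁ < u₁ ∧ u₂ < -d₂ - β₂ := by
      rcases hmem with ⟨h, _⟩ | ⟨_, h⟩ | ⟨h, _⟩ | ⟨h, _⟩
      · simpa using congrArg Prod.fst h
      · exact h
      · simpa using congrArg Prod.fst h
      · simpa using congrArg Prod.snd h
    obtain ⟨hA, hB⟩ := hmain
    have hno01 : ¬ IsPSNE d₁ d₂ β₁ β₂ u₁ u₂ ((0 : ℝ), (1 : ℝ)) := by
      intro h
      have := huniq _ h
      simpa using congrArg Prod.fst this
    rcases lt_or_gt_of_ne ha2 with hlt | hgt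
    · right
      refine ⟨hA, hlt, ?_⟩
      rcases lt_or_gt_of_ne hb1 with h' | h'
      · exact h'
      · exact absurd ((key _).mpr (Or.inr (Or.inr (Or.inl ⟨rfl, hlt, h'⟩)))) hno01
    · exact Or.inl ⟨hgt, hB⟩
  · intro hu
    rw [Set.eq_singleton_iff_unique_mem]
    have hcond : -d₁ < u₁ ∧ u₂ < -d₂ - β₂ := by
      rcases hu with ⟨h, h'⟩ | ⟨h, h', h''⟩
      · exact ⟨by linarith, h'⟩
      · exact ⟨h, by linarith⟩
    refine ⟨(key _).mpr (Or.inr (Or.inl ⟨rfl, hcond.1, hcond.2⟩)), ?_⟩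
    intro y hy
    rw [Set.mem_setOf_eq, key] at hy
    rcases hu with ⟨h, h'⟩ | ⟨h, h', h''⟩ <;>
      rcases hy with ⟨e, c1, c2⟩ | ⟨e, c1, c2⟩ | ⟨e, c1, c2⟩ | ⟨e, c1, c2⟩ <;>
      first
      | exact e
      | linarith
end

section
/- Let U₁ and U₂ be independent random variables each having the standard normal distribution N(0,1), let Φ denote the cumulative distribution function of N(0,1), and let d₁, d₂ ∈ ℝ and β₁, β₂ ≤ 0. Then the probability of the event ({U₁ > −d₁ − β₁ and U₂ < −d₂ − β₂} ∪ {−d₁ < U₁ < −d₁ − β₁ and U₂ < −d₂}) equals Φ(d₁)·(1 − Φ(d₂)) + Φ(d₁ + β₁)·(Φ(d₂) − Φ(d₂ + β₂)). -/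
open MeasureTheory ProbabilityTheory

/-- The cumulative distribution function of the standard normal distribution. -/
noncomputable def Phi (x : ℝ) : ℝ := ((gaussianReal 0 1) (Set.Iic x)).toReal

instance : NullSingletonClass (gaussianReal 0 1) :=
  ⟨fun a => gaussianReal_absolutelyContinuous 0 one_ne_zero (measure_singleton a)⟩

lemma Phi_Iio (x : ℝ) : ((gaussianReal 0 1) (Set.Iio x)).toReal = Phi x := by
  rw [Phi, measure_congr (Iio_ae_eq_Iic)]

lemma Phi_Ioi (x : ℝ) : ((gaussianReal 0 1) (Set.Ioi x)).toReal = 1 - Phi x := by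
  have h := measure_compl (μ := gaussianReal 0 1) (measurableSet_Iic (a := x)) (measure_ne_top _ _)
  rw [Set.compl_Iic] at h
  rw [h, measure_univ, ENNReal.toReal_sub_of_le (prob_le_one) (by simp), Phi]
  simp

lemma Phi_Ioo {a b : ℝ} (hab : a ≤ b) :
    ((gaussianReal 0 1) (Set.Ioo a b)).toReal = Phi b - Phi a := by
  rw [measure_congr (Ioo_ae_eq_Ioc)]
  have : Set.Ioc a b = Set.Iic b \ Set.Iic a := by ext y; simp [and_comm]
  rw [this, measure_diff (Set.Iic_subset_Iic.2 hab) measurableSet_Iic.nullMeasurableSet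
    (measure_ne_top _ _), ENNReal.toReal_sub_of_le (measure_mono (Set.Iic_subset_Iic.2 hab))
    (measure_ne_top _ _), Phi, Phi]

lemma Phi_neg (x : ℝ) : Phi (-x) = 1 - Phi x := by
  have hmap : (gaussianReal 0 1).map (fun y : ℝ => -1 * y) = gaussianReal 0 1 := by
    have := gaussianReal_map_const_mul (μ := 0) (v := 1) (-1)
    simpa using this
  have hpre : (fun y : ℝ => -1 * y) ⁻¹' Set.Iic (-x) = Set.Ici x := by
    ext y; simp [Set.mem_Iic, Set.mem_Ici, neg_le]
  have : gaussianReal 0 1 (Set.Iic (-x)) = gaussianReal 0 1 (Set.Ici x) := by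
    conv_lhs => rw [← hmap]
    rw [Measure.map_apply (by fun_prop) measurableSet_Iic, hpre]
  rw [Phi, this, ← measure_congr (Ioi_ae_eq_Ici), Phi_Ioi]

/-- For U₁, U₂ independent standard normals and β₁, β₂ ≤ 0, the probability of
{U₁ > −d₁−β₁, U₂ < −d₂−β₂} ∪ {−d₁ < U₁ < −d₁−β₁, U₂ < −d₂} equals
Φ(d₁)(1 − Φ(d₂)) + Φ(d₁+β₁)(Φ(d₂) − Φ(d₂+β₂)). -/
theorem stmt13 {Ω : Type*} [MeasurableSpace Ω] (P : Measure Ω) [IsProbabilityMeasure P]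
    (U₁ U₂ : Ω → ℝ) (hm₁ : Measurable U₁) (hm₂ : Measurable U₂)
    (hind : IndepFun U₁ U₂ P)
    (hU₁ : P.map U₁ = gaussianReal 0 1) (hU₂ : P.map U₂ = gaussianReal 0 1)
    (d₁ d₂ β₁ β₂ : ℝ) (hβ₁ : β₁ ≤ 0) (hβ₂ : β₂ ≤ 0) :
    (P ({ω | -d₁ - β₁ < U₁ ω ∧ U₂ ω < -d₂ - β₂} ∪
        {ω | -d₁ < U₁ ω ∧ U₁ ω < -d₁ - β₁ ∧ U₂ ω < -d₂})).toReal =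
      Phi d₁ * (1 - Phi d₂) + Phi (d₁ + β₁) * (Phi d₂ - Phi (d₂ + β₂)) := by
  have hS₁ : {ω | -d₁ - β₁ < U₁ ω ∧ U₂ ω < -d₂ - β₂} =
      U₁ ⁻¹' Set.Ioi (-d₁ - β₁) ∩ U₂ ⁻¹' Set.Iio (-d₂ - β₂) := by
    ext ω; simp [Set.mem_Ioi, Set.mem_Iio]
  have hS₂ : {ω | -d₁ < U₁ ω ∧ U₁ ω < -d₁ - β₁ ∧ U₂ ω < -d₂} =
      U₁ ⁻¹' Set.Ioo (-d₁) (-d₁ - β₁) ∩ U₂ ⁻¹' Set.Iio (-d₂) := by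
    ext ω; simp [Set.mem_Ioo, Set.mem_Iio]; tauto
  have hdisj : Disjoint {ω | -d₁ - β₁ < U₁ ω ∧ U₂ ω < -d₂ - β₂}
      {ω | -d₁ < U₁ ω ∧ U₁ ω < -d₁ - β₁ ∧ U₂ ω < -d₂} := by
    rw [Set.disjoint_left]
    rintro ω ⟨h1, _⟩ ⟨_, h2, _⟩
    exact absurd h1 (not_lt.2 h2.le)
  have hmeas₂ : MeasurableSet {ω | -d₁ < U₁ ω ∧ U₁ ω < -d₁ - β₁ ∧ U₂ ω < -d₂} := by
    rw [hS₂]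
    exact (hm₁ measurableSet_Ioo).inter (hm₂ measurableSet_Iio)
  rw [measure_union hdisj hmeas₂, hS₁, hS₂,
    hind.measure_inter_preimage_eq_mul _ _ measurableSet_Ioi measurableSet_Iio,
    hind.measure_inter_preimage_eq_mul _ _ measurableSet_Ioo measurableSet_Iio,
    ← Measure.map_apply hm₁ measurableSet_Ioi, ← Measure.map_apply hm₂ measurableSet_Iio,
    ← Measure.map_apply hm₁ measurableSet_Ioo, ← Measure.map_apply hm₂ measurableSet_Iio,
    hU₁, hU₂]
  rw [ENNReal.toReal_add (by finiteness) (by finiteness), ENNReal.toReal_mul,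
    ENNReal.toReal_mul, Phi_Ioi, Phi_Iio, Phi_Iio, Phi_Ioo (by linarith)]
  have e1 : Phi (-d₁ - β₁) = 1 - Phi (d₁ + β₁) := by
    rw [show -d₁ - β₁ = -(d₁ + β₁) by ring]; exact Phi_neg _
  have e2 : Phi (-d₂ - β₂) = 1 - Phi (d₂ + β₂) := by
    rw [show -d₂ - β₂ = -(d₂ + β₂) by ring]; exact Phi_neg _
  have e3 : Phi (-d₁) = 1 - Phi d₁ := Phi_neg d₁
  have e4 : Phi (-d₂) = 1 - Phi d₂ := Phi_neg d₂
  rw [e1, e2, e3, e4]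
  ring
end
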